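/- (Proposition 2.) Let K be a compact convex subset of a finite-dimensional real normed vector space E and let f : E → ℝ be continuous on K and convex on K. Define G : K → ℝ by G(x) := sup{ ∑ q_i f(e_i) : k ∈ ℕ, e_i ∈ extremePoints(K), q_i ≥ 0, ∑ q_i = 1, ∑ q_i e_i = x }. Then G is continuous (relative to K) at every point of extremePoints(K). -/

import Mathlib

open scoped BigOperators
open Module Set Filter Topology

universe u

lemma extreme_combo {E : Type u} [NormedAddCommGroup E] [NormedSpace ℝ E]
    {K : Set E} {x : E} (hx : x ∈ Set.extremePoints ℝ K) (hKconv : Convex ℝ K)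
    {k : ℕ} {e : Fin k → E} {q : Fin k → ℝ}
    (he : ∀ i, e i ∈ K) (hq0 : ∀ i, 0 ≤ q i) (hq1 : ∑ i, q i = 1)
    (hsum : ∑ i, q i • e i = x) : ∀ i, q i ≠ 0 → e i = x := by
  intro i hqi
  have hkey : q i • e i + ∑ j ∈ Finset.univ.erase i, q j • e j = x := by
    rw [Finset.add_sum_erase Finset.univ (fun j => q j • e j) (Finset.mem_univ i), hsum]
  have hqsum : q i + ∑ j ∈ Finset.univ.erase i, q j = 1 := by
    rw [Finset.add_sum_erase Finset.univ q (Finset.mem_univ i), hq1]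
  by_cases hq1i : q i = 1
  · have hz : ∀ j ∈ Finset.univ.erase i, q j = 0 := by
      rw [hq1i] at hqsum
      have h0 : ∑ j ∈ Finset.univ.erase i, q j = 0 := by linarith
      exact fun j hj => le_antisymm (by
        calc q j ≤ ∑ j ∈ Finset.univ.erase i, q j :=
          Finset.single_le_sum (fun j _ => hq0 j) hj
        _ = 0 := h0) (hq0 j)
    have : ∑ j ∈ Finset.univ.erase i, q j • e j = 0 :=
      Finset.sum_eq_zero fun j hj => by rw [hz j hj, zero_smul]
    rw [this, add_zero, hq1i, one_smul] at hkey
    exact hkey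
  · have hqi' : 0 < q i := lt_of_le_of_ne (hq0 i) (Ne.symm hqi)
    have hqile : q i ≤ 1 := hq1 ▸ Finset.single_le_sum (fun j _ => hq0 j) (Finset.mem_univ i)
    have hqil : q i < 1 := lt_of_le_of_ne hqile hq1i
    set c : ℝ := 1 - q i with hc
    have hc0 : 0 < c := by simp [hc]; linarith
    set z : E := c⁻¹ • ∑ j ∈ Finset.univ.erase i, q j • e j with hz
    have hzK : z ∈ K := by
      have hrw : z = ∑ j ∈ Finset.univ.erase i, (c⁻¹ * q j) • e j := by
        rw [hz, Finset.smul_sum]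
        exact Finset.sum_congr rfl fun j _ => smul_smul c⁻¹ (q j) (e j)
      rw [hrw]
      refine hKconv.sum_mem (fun j _ => mul_nonneg (le_of_lt (inv_pos.2 hc0)) (hq0 j)) ?_
        (fun j _ => he j)
      rw [← Finset.mul_sum]
      field_simp
      linarith
    have hxseg : x ∈ openSegment ℝ (e i) z := by
      refine ⟨q i, c, hqi', hc0, by ring, ?_⟩
      rw [hz, smul_inv_smul₀ (ne_of_gt hc0)]
      exact hkey
    exact hx.2 (he i) hzK hxseg


set_option maxHeartbeats 1000000 in
lemma mink_endpoint (n : ℕ)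
    (ih : ∀ {E' : Type u} [NormedAddCommGroup E'] [NormedSpace ℝ E'] [FiniteDimensional ℝ E']
      {K' : Set E'}, IsCompact K' → Convex ℝ K' → finrank ℝ (vectorSpan ℝ K') ≤ n →
      K' ⊆ convexHull ℝ (K'.extremePoints ℝ))
    {E : Type u} [NormedAddCommGroup E] [NormedSpace ℝ E] [FiniteDimensional ℝ E]
    {K : Set E} (hKc : IsCompact K) (hKconv : Convex ℝ K)
    (hdim : finrank ℝ (vectorSpan ℝ K) ≤ n + 1)
    {b v : E} (hb : b ∈ K) (hv : v ∈ vectorSpan ℝ K) (hv0 : v ≠ 0)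
    (hside : ∀ s : ℝ, 0 < s → b + s • v ∉ K) :
    b ∈ convexHull ℝ (K.extremePoints ℝ) := by
  set V := vectorSpan ℝ K with hV
  set K' : Set V := {w : V | b + (w : E) ∈ K} with hK'
  have h0K' : (0 : V) ∈ K' := by simp [hK', hb]
  have hK'closed : IsClosed K' := by
    have : K' = (fun w : V => b + (w : E)) ⁻¹' K := rfl
    rw [this]
    exact hKc.isClosed.preimage (by continuity)
  have hK'bdd : Bornology.IsBounded K' := by
    obtain ⟨C, hC⟩ := Bornology.IsBounded.subset_closedBall hKc.isBounded (0 : E)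
    apply (Metric.isBounded_closedBall (x := (0:V)) (r := C + ‖b‖)).subset
    intro w hw
    have h1 : ‖b + (w:E)‖ ≤ C := by simpa using hC hw
    simp only [Metric.mem_closedBall, dist_zero_right]
    have hnw : ‖w‖ = ‖(w : E)‖ := rfl
    rw [hnw]
    calc ‖(w:E)‖ = ‖(b + (w:E)) - b‖ := by rw [add_sub_cancel_left]
      _ ≤ ‖b + (w:E)‖ + ‖b‖ := norm_sub_le _ _
      _ ≤ C + ‖b‖ := by linarith
  have hK'c : IsCompact K' := Metric.isCompact_iff_isClosed_bounded.2 ⟨hK'closed, hK'bdd⟩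
  have hK'conv : Convex ℝ K' := by
    intro w1 h1 w2 h2 a c ha hc hac
    show b + ((a • w1 + c • w2 : V) : E) ∈ K
    have heq : a • (b + (w1:E)) + c • (b + (w2:E)) = (a + c) • b + (a • (w1:E) + c • (w2:E)) := by
      module
    have heq2 : b + ((a • w1 + c • w2 : V) : E) = a • (b + (w1:E)) + c • (b + (w2:E)) := by
      simp only [Submodule.coe_add, Submodule.coe_smul]
      rw [heq, hac, one_smul]
    rw [heq2]
    exact hKconv h1 h2 ha hc hac
  have hspan : vectorSpan ℝ K' = ⊤ := by
    have hmap : Submodule.map V.subtype (vectorSpan ℝ K') = V := by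
      rw [vectorSpan_def, Submodule.map_span]
      have himg : V.subtype '' (K' -ᵥ K') = K -ᵥ K := by
        ext u
        constructor
        · rintro ⟨w, hw, rfl⟩
          obtain ⟨w1, hw1, w2, hw2, rfl⟩ := hw
          refine ⟨b + (w1:E), hw1, b + (w2:E), hw2, ?_⟩
          simp [vsub_eq_sub]
        · rintro ⟨k1, hk1, k2, hk2, rfl⟩
          have hm1 : k1 - b ∈ V := by
            simpa [vsub_eq_sub] using vsub_mem_vectorSpan ℝ hk1 hb
          have hm2 : k2 - b ∈ V := by
            simpa [vsub_eq_sub] using vsub_mem_vectorSpan ℝ hk2 hb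
          refine ⟨(⟨k1 - b, hm1⟩ : V) -ᵥ (⟨k2 - b, hm2⟩ : V), ⟨⟨k1-b, hm1⟩, ?_, ⟨k2-b, hm2⟩, ?_, rfl⟩, ?_⟩
          · show b + (k1 - b) ∈ K
            simpa using hk1
          · show b + (k2 - b) ∈ K
            simpa using hk2
          · show (((⟨k1 - b, hm1⟩ : V) - (⟨k2 - b, hm2⟩ : V) : V) : E) = (k1 -ᵥ k2 : E)
            simp only [vsub_eq_sub, AddSubgroupClass.coe_sub]
            abel
      rw [himg, ← vectorSpan_def]
    have hinj := Submodule.map_injective_of_injective V.injective_subtype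
    apply hinj
    rw [hmap, Submodule.map_subtype_top]
  have hK'ne : K'.Nonempty := ⟨0, h0K'⟩
  have haff : affineSpan ℝ K' = ⊤ :=
    (AffineSubspace.affineSpan_eq_top_iff_vectorSpan_eq_top_of_nonempty ℝ _ _ hK'ne).2 hspan
  have hint : (interior K').Nonempty := hK'conv.interior_nonempty_iff_affineSpan_eq_top.2 haff
  have h0ni : (0 : V) ∉ interior K' := by
    intro h
    obtain ⟨ε, hε, hball⟩ := Metric.isOpen_iff.1 isOpen_interior 0 h
    set v' : V := ⟨v, hv⟩ with hv'
    have hnv' : ‖v'‖ = ‖v‖ := rfl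
    have hvpos : 0 < ‖v'‖ := by rw [hnv']; exact norm_pos_iff.2 hv0
    set s : ℝ := ε / (2 * ‖v'‖) with hs
    have hs0 : 0 < s := div_pos hε (by positivity)
    have hmem : s • v' ∈ Metric.ball (0:V) ε := by
      simp only [Metric.mem_ball, dist_zero_right, norm_smul, Real.norm_eq_abs,
        abs_of_pos hs0]
      rw [hs]
      rw [div_mul_eq_mul_div, mul_comm (2:ℝ) ‖v'‖, ← div_div]
      have : ε * ‖v'‖ / ‖v'‖ = ε := by
        rw [mul_div_assoc, div_self (ne_of_gt hvpos), mul_one]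
      rw [this]
      linarith
    have hK'mem : s • v' ∈ K' := interior_subset (hball hmem)
    have : b + s • v ∈ K := by
      have : ((s • v' : V) : E) = s • v := rfl
      exact hK'mem
    exact hside s hs0 this
  obtain ⟨f, hf⟩ := geometric_hahn_banach_open_point hK'conv.interior isOpen_interior h0ni
  have hf0 : ∀ w ∈ interior K', f w < 0 := fun w hw => by simpa using hf w hw
  obtain ⟨w₀, hw₀⟩ := hint
  have hfle : ∀ w ∈ K', f w ≤ 0 := by
    intro w hw
    have key : ∀ t : ℝ, t ∈ Set.Ioc (0:ℝ) 1 → f w + t * (f w₀ - f w) < 0 := by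
      intro t ht
      have h1 := hf0 _ (hK'conv.add_smul_sub_mem_interior hw hw₀ ht)
      simpa [map_add, map_smul, smul_eq_mul, map_sub, mul_sub] using h1
    by_contra hpos
    push_neg at hpos
    set d : ℝ := f w₀ - f w with hd
    set t : ℝ := min 1 (f w / (2 * (|d| + 1))) with ht
    have habs : (0:ℝ) ≤ |d| := abs_nonneg d
    have ht0 : 0 < t := lt_min one_pos (div_pos hpos (by positivity))
    have ht1 : t ≤ 1 := min_le_left _ _
    have hk := key t ⟨ht0, ht1⟩
    have h1 : -(t * |d|) ≤ t * d := by nlinarith [neg_abs_le d]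
    have h2 : t * |d| ≤ (f w / (2*(|d|+1))) * |d| :=
      mul_le_mul_of_nonneg_right (min_le_right _ _) habs
    have h3 : (f w / (2*(|d|+1))) * |d| < f w := by
      rw [div_mul_eq_mul_div, div_lt_iff₀ (by positivity)]
      nlinarith
    linarith
  set F : Set V := K' ∩ {w | f w = 0} with hF
  have h0F : (0:V) ∈ F := ⟨h0K', by simp⟩
  have hFc : IsCompact F := hK'c.inter_right (isClosed_eq f.continuous continuous_const)
  have hFconv : Convex ℝ F := by
    intro w1 h1 w2 h2 a c ha hc hac
    refine ⟨hK'conv h1.1 h2.1 ha hc hac, ?_⟩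
    have hfw1 : f w1 = 0 := h1.2
    have hfw2 : f w2 = 0 := h2.2
    simp only [Set.mem_setOf_eq, map_add, map_smul, smul_eq_mul, hfw1, hfw2]
    ring
  have hext : IsExtreme ℝ K' F := by
    refine ⟨Set.inter_subset_left, ?_⟩
    intro x1 hx1 x2 hx2 w hwF hwseg
    obtain ⟨a, c, ha, hc, hac, habc⟩ := hwseg
    have h1 : f x1 ≤ 0 := hfle x1 hx1
    have h2 : f x2 ≤ 0 := hfle x2 hx2
    have h3 : a * f x1 + c * f x2 = 0 := by
      have hfw : f w = 0 := hwF.2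
      rw [← habc] at hfw
      simpa [map_add, map_smul, smul_eq_mul] using hfw
    have hfx1 : f x1 = 0 := by nlinarith
    have hfx2 : f x2 = 0 := by nlinarith
    exact ⟨hx1, hfx1⟩
  have hFdim : finrank ℝ (vectorSpan ℝ F) ≤ n := by
    have hle : vectorSpan ℝ F ≤ LinearMap.ker (f : V →ₗ[ℝ] ℝ) := by
      rw [vectorSpan_def, Submodule.span_le]
      rintro u ⟨w1, hw1, w2, hw2, rfl⟩
      have : f (w1 - w2) = 0 := by
        rw [map_sub, hw1.2, hw2.2, sub_zero]
      simpa [LinearMap.mem_ker, vsub_eq_sub] using this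
    have hker : LinearMap.ker (f : V →ₗ[ℝ] ℝ) < ⊤ := by
      rw [lt_top_iff_ne_top]
      intro htop
      have hmem : w₀ ∈ LinearMap.ker (f : V →ₗ[ℝ] ℝ) := htop ▸ Submodule.mem_top
      have : f w₀ = 0 := by simpa using hmem
      linarith [hf0 w₀ hw₀]
    have hlt : finrank ℝ (vectorSpan ℝ F) < n + 1 :=
      lt_of_lt_of_le (lt_of_le_of_lt (Submodule.finrank_mono hle) (Submodule.finrank_lt hker.ne)) hdim
    exact Nat.lt_succ_iff.1 hlt
  have hsub := ih hFc hFconv hFdim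
  have h0hull : (0:V) ∈ convexHull ℝ (K'.extremePoints ℝ) :=
    convexHull_mono hext.extremePoints_subset_extremePoints (hsub h0F)
  set g : V →ᵃ[ℝ] E :=
    { toFun := fun w => b + (w : E)
      linear := V.subtype
      map_vadd' := by
        intro p vv
        simp only [vadd_eq_add, Submodule.coe_add, Submodule.subtype_apply]
        abel } with hg
  have hgext : ∀ w ∈ K'.extremePoints ℝ, g w ∈ K.extremePoints ℝ := by
    intro w hw
    refine ⟨hw.1, ?_⟩
    intro x1 hx1 x2 hx2 hseg
    have hw1m : x1 - b ∈ V := by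
      simpa [vsub_eq_sub] using vsub_mem_vectorSpan ℝ hx1 hb
    have hw2m : x2 - b ∈ V := by
      simpa [vsub_eq_sub] using vsub_mem_vectorSpan ℝ hx2 hb
    set w1 : V := ⟨x1 - b, hw1m⟩ with hw1d
    set w2 : V := ⟨x2 - b, hw2m⟩ with hw2d
    have hw1K' : w1 ∈ K' := by
      show b + (x1 - b) ∈ K
      simpa using hx1
    have hw2K' : w2 ∈ K' := by
      show b + (x2 - b) ∈ K
      simpa using hx2
    obtain ⟨a, c, ha, hc, hac, habc⟩ := hseg
    have hgw : a • x1 + c • x2 = b + (w:E) := habc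
    have hseg' : w ∈ openSegment ℝ w1 w2 := by
      refine ⟨a, c, ha, hc, hac, ?_⟩
      apply Subtype.ext
      show ((a • w1 + c • w2 : V) : E) = (w : E)
      simp only [Submodule.coe_add, Submodule.coe_smul]
      show a • (x1 - b) + c • (x2 - b) = (w : E)
      have hexp : a • (x1 - b) + c • (x2 - b) = a • x1 + c • x2 - (a + c) • b := by module
      rw [hexp, hac, hgw, one_smul]
      abel
    have hw1e := hw.2 hw1K' hw2K' hseg'
    · have hcoe : (w1 : E) = (w : E) := congrArg _ hw1e
      show x1 = b + (w:E)
      rw [← hcoe]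
      show x1 = b + (x1 - b)
      abel
  have himg : g 0 ∈ g '' (convexHull ℝ (K'.extremePoints ℝ)) := ⟨0, h0hull, rfl⟩
  rw [AffineMap.image_convexHull] at himg
  have hmono : g '' (K'.extremePoints ℝ) ⊆ K.extremePoints ℝ := by
    rintro _ ⟨w, hw, rfl⟩
    exact hgext w hw
  have hb' : g 0 ∈ convexHull ℝ (K.extremePoints ℝ) := convexHull_mono hmono himg
  have : g 0 = b := by
    show b + ((0:V):E) = b
    simp
  rwa [this] at hb'


set_option maxHeartbeats 1000000 in
lemma minkowski_aux : ∀ (n : ℕ) {E : Type u} [NormedAddCommGroup E] [NormedSpace ℝ E]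
    [FiniteDimensional ℝ E] {K : Set E}, IsCompact K → Convex ℝ K →
    finrank ℝ (vectorSpan ℝ K) ≤ n → K ⊆ convexHull ℝ (K.extremePoints ℝ) := by
  intro n
  induction n with
  | zero =>
    intro E _ _ _ K hKc hKconv hdim x hxK
    have hbot : vectorSpan ℝ K = ⊥ :=
      Submodule.finrank_eq_zero.1 (Nat.le_zero.1 hdim)
    have hsing : ∀ y ∈ K, y = x := by
      intro y hy
      have h1 : y - x ∈ vectorSpan ℝ K := by
        simpa [vsub_eq_sub] using vsub_mem_vectorSpan ℝ hy hxK
      rw [hbot, Submodule.mem_bot] at h1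
      exact sub_eq_zero.1 h1
    have hxe : x ∈ K.extremePoints ℝ := by
      refine ⟨hxK, ?_⟩
      intro x1 hx1 x2 hx2 _
      exact hsing x1 hx1
    exact subset_convexHull ℝ _ hxe
  | succ n ih =>
    intro E _ _ _ K hKc hKconv hdim x hxK
    by_cases hxe : x ∈ K.extremePoints ℝ
    · exact subset_convexHull ℝ _ hxe
    rw [mem_extremePoints] at hxe
    push_neg at hxe
    obtain ⟨x1, hx1, x2, hx2, hseg, hne⟩ := hxe hxK
    obtain ⟨a, c, ha, hc, hac, habc⟩ := hseg
    have himp : ∀ y1 y2 : E, ∀ a' c' : ℝ, 0 < c' → a' + c' = 1 →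
        a' • y1 + c' • y2 = x → y1 = x → y2 = x := by
      intro y1 y2 a' c' hc' hac' habc' hy1
      have h1 : c' • y2 = c' • x := by
        rw [hy1] at habc'
        have : a' • x + c' • y2 = (a' + c') • x := by rw [hac', one_smul, habc']
        rw [add_smul] at this
        exact add_left_cancel this
      exact smul_right_injective E (ne_of_gt hc') h1
    have hx1ne : x1 ≠ x := by
      intro h
      exact hne h (himp x1 x2 a c hc hac habc h)
    have hx2ne : x2 ≠ x := by
      intro h
      have h1 : x1 = x := himp x2 x1 c a ha (by linarith) (by rw [← habc]; abel) h
      exact (hne h1) h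
    set v : E := x1 - x with hvdef
    have hv : v ∈ vectorSpan ℝ K := by
      simpa [vsub_eq_sub] using vsub_mem_vectorSpan ℝ hx1 hxK
    have hv0 : v ≠ 0 := sub_ne_zero.2 hx1ne
    set T : Set ℝ := {t : ℝ | x + t • v ∈ K} with hT
    have hTclosed : IsClosed T := by
      have : T = (fun t : ℝ => x + t • v) ⁻¹' K := rfl
      rw [this]
      exact hKc.isClosed.preimage (by continuity)
    have hTbdd : Bornology.IsBounded T := by
      obtain ⟨C, hC⟩ := Bornology.IsBounded.subset_closedBall hKc.isBounded x
      have hnv : 0 < ‖v‖ := norm_pos_iff.2 hv0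
      apply (Metric.isBounded_Icc (-(C/‖v‖)) (C/‖v‖)).subset
      intro t ht
      have h1 : dist (x + t • v) x ≤ C := hC ht
      have h2 : |t| * ‖v‖ ≤ C := by
        rw [dist_eq_norm, add_sub_cancel_left, norm_smul, Real.norm_eq_abs] at h1
        exact h1
      have h3 : |t| ≤ C / ‖v‖ := (le_div_iff₀ hnv).2 h2
      exact abs_le.1 h3
    have hTc : IsCompact T := Metric.isCompact_iff_isClosed_bounded.2 ⟨hTclosed, hTbdd⟩
    have h1T : (1:ℝ) ∈ T := by
      show x + (1:ℝ) • v ∈ K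
      rw [one_smul, hvdef]
      simpa using hx1
    have hnegT : -(a/c) ∈ T := by
      have hcx2 : c • x2 = x - a • x1 := by
        rw [← habc]; abel
      have h1 : c • (x + (-(a/c)) • v) = c • x2 := by
        rw [hcx2, hvdef]
        match_scalars
        · field_simp
          linarith
        · field_simp
      have hx2eq : x + (-(a/c)) • v = x2 := smul_right_injective E (ne_of_gt hc) h1
      show x + (-(a/c)) • v ∈ K
      rw [hx2eq]
      exact hx2
    have hTne : T.Nonempty := ⟨1, h1T⟩
    set tp : ℝ := sSup T with htp
    set tm : ℝ := sInf T with htm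
    have htpT : tp ∈ T := hTc.sSup_mem hTne
    have htmT : tm ∈ T := hTc.sInf_mem hTne
    have htp1 : 1 ≤ tp := le_csSup hTc.bddAbove h1T
    have htm0 : tm < 0 := by
      have h1 : tm ≤ -(a/c) := csInf_le hTc.bddBelow hnegT
      have h2 : 0 < a / c := div_pos ha hc
      linarith
    have hbK : x + tp • v ∈ K := htpT
    have haK : x + tm • v ∈ K := htmT
    have hsideb : ∀ s : ℝ, 0 < s → (x + tp • v) + s • v ∉ K := by
      intro s hs hmem
      have h1 : tp + s ∈ T := by
        show x + (tp + s) • v ∈ K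
        rw [add_smul, ← add_assoc]
        exact hmem
      have := le_csSup hTc.bddAbove h1
      linarith
    have hsidea : ∀ s : ℝ, 0 < s → (x + tm • v) + s • (-v) ∉ K := by
      intro s hs hmem
      have h1 : tm - s ∈ T := by
        show x + (tm - s) • v ∈ K
        rw [sub_smul, ← add_sub_assoc]
        rw [smul_neg] at hmem
        rwa [sub_eq_add_neg]
      have := csInf_le hTc.bddBelow h1
      linarith
    have hbhull : x + tp • v ∈ convexHull ℝ (K.extremePoints ℝ) :=
      mink_endpoint n (fun {E'} _ _ _ {K'} a b c => ih a b c) hKc hKconv hdim hbK hv hv0 hsideb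
    have hahull : x + tm • v ∈ convexHull ℝ (K.extremePoints ℝ) :=
      mink_endpoint n (fun {E'} _ _ _ {K'} a b c => ih a b c) hKc hKconv hdim haK
        ((vectorSpan ℝ K).neg_mem hv) (neg_ne_zero.2 hv0) hsidea
    have hd : 0 < tp - tm := by linarith
    have hxseg : x ∈ segment ℝ (x + tm • v) (x + tp • v) := by
      refine ⟨tp / (tp - tm), (-tm) / (tp - tm), div_nonneg (by linarith) (le_of_lt hd),
        div_nonneg (by linarith) (le_of_lt hd), ?_, ?_⟩
      · rw [← add_div, div_eq_one_iff_eq (ne_of_gt hd)]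
        ring
      · match_scalars <;> (field_simp; ring)
    exact (convex_convexHull ℝ _).segment_subset hahull hbhull hxseg

lemma minkowski {E : Type u} [NormedAddCommGroup E] [NormedSpace ℝ E]
    [FiniteDimensional ℝ E] {K : Set E} (hKc : IsCompact K) (hKconv : Convex ℝ K) :
    K ⊆ convexHull ℝ (K.extremePoints ℝ) :=
  minkowski_aux _ hKc hKconv le_rfl


lemma sum_pad {c m : ℕ} (hc : c ≤ m) {M : Type*} [AddCommMonoid M] (F : Fin c → M) :
    ∑ j : Fin m, (if h : (j : ℕ) < c then F ⟨j, h⟩ else 0) = ∑ i : Fin c, F i := by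
  classical
  set g : ℕ → M := fun j => if h : j < c then F ⟨j, h⟩ else 0 with hg
  have h1 : ∑ j : Fin m, (if h : (j : ℕ) < c then F ⟨j, h⟩ else 0) = ∑ j ∈ Finset.range m, g j := by
    rw [Finset.sum_range fun j => g j]
  rw [h1]
  have h2 : ∑ j ∈ Finset.range c, g j = ∑ j ∈ Finset.range m, g j := by
    apply Finset.sum_subset (Finset.range_subset_range.2 hc)
    intro j _ hj
    rw [Finset.mem_range, not_lt] at hj
    exact dif_neg (not_lt.2 hj)
  rw [← h2, Finset.sum_range fun j => g j]
  apply Finset.sum_congr rfl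
  intro i _
  show g i = F i
  rw [hg]
  simp only []
  rw [dif_pos i.isLt]

lemma decomp_bounded {E : Type u} [NormedAddCommGroup E] [NormedSpace ℝ E] [FiniteDimensional ℝ E]
    (f : E → ℝ) (S : Set E) {x₀ : E} (hx₀ : x₀ ∈ S) {y : E} {r : ℝ}
    {k : ℕ} {e : Fin k → E} {q : Fin k → ℝ}
    (he : ∀ i, e i ∈ S) (hq0 : ∀ i, 0 ≤ q i) (hq1 : ∑ i, q i = 1)
    (hsum : ∑ i, q i • e i = y) (hval : ∑ i, q i * f (e i) = r) :
    ∃ (e' : Fin (finrank ℝ E + 2) → E) (q' : Fin (finrank ℝ E + 2) → ℝ),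
      (∀ i, e' i ∈ S) ∧ (∀ i, 0 ≤ q' i) ∧ ∑ i, q' i = 1 ∧
      ∑ i, q' i • e' i = y ∧ ∑ i, q' i * f (e' i) = r := by
  classical
  set g : E → E × ℝ := fun u => (u, f u) with hg
  have hmem : (y, r) ∈ convexHull ℝ (g '' S) := by
    have hrw : ∑ i, q i • g (e i) = (y, r) := by
      rw [Prod.ext_iff]
      constructor
      · rw [Prod.fst_sum]
        simpa using hsum
      · rw [Prod.snd_sum]
        simpa using hval
    rw [← hrw]
    exact (convex_convexHull ℝ (g '' S)).sum_mem (fun i _ => hq0 i) hq1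
      (fun i _ => subset_convexHull ℝ _ ⟨e i, he i, rfl⟩)
  obtain ⟨ι, hι, z, w, hrange, hindep, hwpos, hwsum, hwz⟩ :=
    eq_pos_convex_span_of_mem_convexHull hmem
  letI := hι
  have hz1 : ∀ i, (z i).1 ∈ S ∧ (z i).2 = f ((z i).1) := by
    intro i
    obtain ⟨s, hsS, hgs⟩ := hrange ⟨i, rfl⟩
    rw [← hgs]
    exact ⟨hsS, rfl⟩
  have hcard : Fintype.card ι ≤ finrank ℝ E + 2 := by
    have h1 := hindep.card_le_finrank_succ
    have h2 : finrank ℝ (vectorSpan ℝ (Set.range z)) ≤ finrank ℝ (E × ℝ) :=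
      Submodule.finrank_le _
    have h3 : finrank ℝ (E × ℝ) = finrank ℝ E + 1 := by
      rw [Module.finrank_prod, Module.finrank_self]
    omega
  set c := Fintype.card ι with hc
  set eqv : Fin c ≃ ι := (Fintype.equivFin ι).symm with heqv
  refine ⟨fun j => if h : (j : ℕ) < c then (z (eqv ⟨j, h⟩)).1 else x₀,
          fun j => if h : (j : ℕ) < c then w (eqv ⟨j, h⟩) else 0, ?_, ?_, ?_, ?_, ?_⟩
  · intro j
    dsimp only
    by_cases h : (j : ℕ) < c
    · rw [dif_pos h]; exact (hz1 _).1
    · rw [dif_neg h]; exact hx₀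
  · intro j
    dsimp only
    by_cases h : (j : ℕ) < c
    · rw [dif_pos h]; exact (hwpos _).le
    · rw [dif_neg h]
  · rw [sum_pad hcard (fun i => w (eqv i))]
    rw [Equiv.sum_comp eqv w]
    exact hwsum
  · have hterm : ∀ j : Fin (finrank ℝ E + 2),
        (if h : (j : ℕ) < c then w (eqv ⟨j, h⟩) else 0) •
          (if h : (j : ℕ) < c then (z (eqv ⟨j, h⟩)).1 else x₀) =
        (if h : (j : ℕ) < c then w (eqv ⟨j, h⟩) • (z (eqv ⟨j, h⟩)).1 else 0) := by
      intro j
      by_cases h : (j : ℕ) < c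
      · simp only [dif_pos h]
      · simp only [dif_neg h, zero_smul]
    rw [Finset.sum_congr rfl fun j _ => hterm j]
    rw [sum_pad hcard (fun i => w (eqv i) • (z (eqv i)).1)]
    rw [Equiv.sum_comp eqv (fun i => w i • (z i).1)]
    have : ∑ i, w i • (z i).1 = (∑ i, w i • z i).1 := by
      rw [Prod.fst_sum]
      apply Finset.sum_congr rfl
      intro i _
      rw [Prod.smul_fst]
    rw [this, hwz]
  · have hterm : ∀ j : Fin (finrank ℝ E + 2),
        (if h : (j : ℕ) < c then w (eqv ⟨j, h⟩) else 0) *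
          f (if h : (j : ℕ) < c then (z (eqv ⟨j, h⟩)).1 else x₀) =
        (if h : (j : ℕ) < c then w (eqv ⟨j, h⟩) * (z (eqv ⟨j, h⟩)).2 else 0) := by
      intro j
      by_cases h : (j : ℕ) < c
      · simp only [dif_pos h]
        rw [(hz1 (eqv ⟨j, h⟩)).2]
      · simp only [dif_neg h, zero_mul]
    rw [Finset.sum_congr rfl fun j _ => hterm j]
    rw [sum_pad hcard (fun i => w (eqv i) * (z (eqv i)).2)]
    rw [Equiv.sum_comp eqv (fun i => w i * (z i).2)]
    have : ∑ i, w i * (z i).2 = (∑ i, w i • z i).2 := by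
      rw [Prod.snd_sum]
      apply Finset.sum_congr rfl
      intro i _
      rw [Prod.smul_snd, smul_eq_mul]
    rw [this, hwz]

set_option maxHeartbeats 1600000 in
theorem guessing_probability_continuous_at_extreme_points
    {E : Type*} [NormedAddCommGroup E] [NormedSpace ℝ E] [FiniteDimensional ℝ E]
    (K : Set E) (hKc : IsCompact K) (hKconv : Convex ℝ K)
    (f : E → ℝ) (hf : ContinuousOn f K) (hfconv : ConvexOn ℝ K f)
    (G : E → ℝ)
    (hG : ∀ x : E, G x =
      sSup {r : ℝ | ∃ (k : ℕ) (e : Fin k → E) (q : Fin k → ℝ),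
        (∀ i, e i ∈ Set.extremePoints ℝ K) ∧ (∀ i, 0 ≤ q i) ∧ ∑ i, q i = 1 ∧
        ∑ i, q i • e i = x ∧ ∑ i, q i * f (e i) = r}) :
    ∀ x ∈ Set.extremePoints ℝ K, ContinuousWithinAt G K x := by
  intro x hx
  classical
  have hxK : x ∈ K := hx.1
  have hKne : K.Nonempty := ⟨x, hxK⟩
  set D : E → Set ℝ := fun y => {r : ℝ | ∃ (k : ℕ) (e : Fin k → E) (q : Fin k → ℝ),
    (∀ i, e i ∈ Set.extremePoints ℝ K) ∧ (∀ i, 0 ≤ q i) ∧ ∑ i, q i = 1 ∧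
    ∑ i, q i • e i = y ∧ ∑ i, q i * f (e i) = r} with hD
  have hGD : ∀ y, G y = sSup (D y) := hG
  obtain ⟨z₀, hz₀K, hz₀max⟩ := hKc.exists_isMaxOn hKne hf
  set C := f z₀ with hC
  have hbdd : ∀ y, BddAbove (D y) := by
    intro y
    refine ⟨C, ?_⟩
    rintro r ⟨k, e, q, he, hq0, hq1, hsum, hval⟩
    calc r = ∑ i, q i * f (e i) := hval.symm
      _ ≤ ∑ i, q i * C := Finset.sum_le_sum fun i _ =>
          mul_le_mul_of_nonneg_left (hz₀max (extremePoints_subset (he i))) (hq0 i)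
      _ = C := by rw [← Finset.sum_mul, hq1, one_mul]
  have hne : ∀ y ∈ K, (D y).Nonempty := by
    intro y hyK
    have hy' : y ∈ convexHull ℝ (K.extremePoints ℝ) := minkowski hKc hKconv hyK
    obtain ⟨ι, hι, z, w, hrange, hindep, hwpos, hwsum, hwz⟩ :=
      eq_pos_convex_span_of_mem_convexHull hy'
    letI := hι
    set c := Fintype.card ι with hc
    set eqv : Fin c ≃ ι := (Fintype.equivFin ι).symm with heqv
    refine ⟨∑ i : Fin c, w (eqv i) * f (z (eqv i)), c, z ∘ eqv, w ∘ eqv, ?_, ?_, ?_, ?_, rfl⟩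
    · intro i
      exact hrange ⟨eqv i, rfl⟩
    · intro i
      exact (hwpos _).le
    · exact (Equiv.sum_comp eqv w).trans hwsum
    · exact (Equiv.sum_comp eqv (fun i => w i • z i)).trans hwz
  have hDx : D x = {f x} := by
    apply Set.eq_singleton_iff_unique_mem.2
    constructor
    · exact ⟨1, fun _ => x, fun _ => 1, fun _ => hx, fun _ => zero_le_one, by simp, by simp,
        by simp⟩
    · rintro r ⟨k, e, q, he, hq0, hq1, hsum, hval⟩
      have hcomb := extreme_combo hx hKconv (fun i => extremePoints_subset (he i)) hq0 hq1 hsum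
      rw [← hval]
      have hterm : ∀ i, q i * f (e i) = q i * f x := by
        intro i
        by_cases h : q i = 0
        · rw [h, zero_mul, zero_mul]
        · rw [hcomb i h]
      rw [Finset.sum_congr rfl fun i _ => hterm i, ← Finset.sum_mul, hq1, one_mul]
  have hGx : G x = f x := by rw [hGD, hDx, csSup_singleton]
  show Tendsto G (nhdsWithin x K) (nhds (G x))
  rw [hGx]
  rw [tendsto_iff_seq_tendsto]
  intro u hu
  rw [tendsto_nhdsWithin_iff] at hu
  obtain ⟨hu1, hu2⟩ := hu
  obtain ⟨N, hN⟩ := eventually_atTop.1 hu2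
  rw [← tendsto_add_atTop_iff_nat N]
  set vv : ℕ → E := fun n => u (n + N) with hvv
  have hvK : ∀ n, vv n ∈ K := fun n => hN (n + N) (Nat.le_add_left N n)
  have hvx : Tendsto vv atTop (nhds x) := hu1.comp (tendsto_add_atTop_nat N)
  set m := finrank ℝ E + 2 with hm
  have key : ∀ n : ℕ, ∃ (e : Fin m → E) (q : Fin m → ℝ),
      (∀ i, e i ∈ Set.extremePoints ℝ K) ∧ (∀ i, 0 ≤ q i) ∧ ∑ i, q i = 1 ∧
      ∑ i, q i • e i = vv n ∧
      G (vv n) - 1/((n:ℝ)+1) < ∑ i, q i * f (e i) ∧ ∑ i, q i * f (e i) ≤ G (vv n) := by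
    intro n
    have hnonempty := hne (vv n) (hvK n)
    have hsup : G (vv n) = sSup (D (vv n)) := hGD _
    have hlt : G (vv n) - 1/((n:ℝ)+1) < sSup (D (vv n)) := by
      rw [← hsup]
      have hpos : (0:ℝ) < 1/((n:ℝ)+1) := by positivity
      linarith
    obtain ⟨r, hrD, hrlt⟩ := exists_lt_of_lt_csSup hnonempty hlt
    obtain ⟨k, e, q, he, hq0, hq1, hsum, hval⟩ := hrD
    obtain ⟨e', q', he', hq0', hq1', hsum', hval'⟩ :=
      decomp_bounded f (Set.extremePoints ℝ K) hx he hq0 hq1 hsum hval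
    refine ⟨e', q', he', hq0', hq1', hsum', ?_, ?_⟩
    · rw [hval']
      exact hrlt
    · rw [hval', hsup]
      exact le_csSup (hbdd _) ⟨k, e, q, he, hq0, hq1, hsum, hval⟩
  choose ee qq hee hqq0 hqq1 hqqsum hlb hub using key
  apply tendsto_of_subseq_tendsto
  intro ns hns
  set S : Set ((Fin m → E) × (Fin m → ℝ)) :=
    (Set.univ.pi fun _ => closure (Set.extremePoints ℝ K)) ×ˢ
      (Set.univ.pi fun _ => Set.Icc (0:ℝ) 1) with hS
  have hclK : closure (Set.extremePoints ℝ K) ⊆ K := by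
    intro z hz
    have h1 := closure_mono (extremePoints_subset : Set.extremePoints ℝ K ⊆ K) hz
    rwa [hKc.isClosed.closure_eq] at h1
  have hclc : IsCompact (closure (Set.extremePoints ℝ K)) :=
    hKc.of_isClosed_subset isClosed_closure hclK
  have hSc : IsCompact S :=
    (isCompact_univ_pi fun _ => hclc).prod (isCompact_univ_pi fun _ => isCompact_Icc)
  have hmemS : ∀ n, (ee (ns n), qq (ns n)) ∈ S := by
    intro n
    constructor
    · intro i _
      exact subset_closure (hee (ns n) i)
    · intro i _
      refine ⟨hqq0 (ns n) i, ?_⟩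
      calc qq (ns n) i ≤ ∑ j, qq (ns n) j :=
            Finset.single_le_sum (fun j _ => hqq0 (ns n) j) (Finset.mem_univ i)
        _ = 1 := hqq1 (ns n)
  obtain ⟨pL, hlimS, φ, hφmono, hφtend⟩ := hSc.tendsto_subseq hmemS
  obtain ⟨eL, qL⟩ := pL
  have htend_e : ∀ i, Tendsto (fun n => ee (ns (φ n)) i) atTop (nhds (eL i)) := by
    intro i
    have h1 : Tendsto (fun n => ee (ns (φ n))) atTop (nhds eL) :=
      (continuous_fst.tendsto _).comp hφtend
    exact (tendsto_pi_nhds.1 h1) i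
  have htend_q : ∀ i, Tendsto (fun n => qq (ns (φ n)) i) atTop (nhds (qL i)) := by
    intro i
    have h1 : Tendsto (fun n => qq (ns (φ n))) atTop (nhds qL) :=
      (continuous_snd.tendsto _).comp hφtend
    exact (tendsto_pi_nhds.1 h1) i
  have hnsφ : Tendsto (fun n => ns (φ n)) atTop atTop := hns.comp hφmono.tendsto_atTop
  have heLK : ∀ i, eL i ∈ K := fun i => hclK (hlimS.1 i (Set.mem_univ i))
  have hqL0 : ∀ i, 0 ≤ qL i := fun i => (hlimS.2 i (Set.mem_univ i)).1
  have hqL1 : ∑ i, qL i = 1 := by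
    have h1 : Tendsto (fun n => ∑ i, qq (ns (φ n)) i) atTop (nhds (∑ i, qL i)) :=
      tendsto_finset_sum _ fun i _ => htend_q i
    have h2 : Tendsto (fun n => ∑ i, qq (ns (φ n)) i) atTop (nhds 1) := by
      simp only [hqq1]
      exact tendsto_const_nhds
    exact tendsto_nhds_unique h1 h2
  have hqLsum : ∑ i, qL i • eL i = x := by
    have h1 : Tendsto (fun n => ∑ i, qq (ns (φ n)) i • ee (ns (φ n)) i) atTop
        (nhds (∑ i, qL i • eL i)) :=
      tendsto_finset_sum _ fun i _ => (htend_q i).smul (htend_e i)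
    have h2 : Tendsto (fun n => ∑ i, qq (ns (φ n)) i • ee (ns (φ n)) i) atTop (nhds x) := by
      have heq : (fun n => ∑ i, qq (ns (φ n)) i • ee (ns (φ n)) i)
          = fun n => vv (ns (φ n)) := by
        funext n
        exact hqqsum (ns (φ n))
      rw [heq]
      exact hvx.comp hnsφ
    exact tendsto_nhds_unique h1 h2
  have hfval : Tendsto (fun n => ∑ i, qq (ns (φ n)) i * f (ee (ns (φ n)) i)) atTop
      (nhds (f x)) := by
    have hcomb := extreme_combo hx hKconv heLK hqL0 hqL1 hqLsum
    have hfx : ∑ i, qL i * f (eL i) = f x := by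
      have hterm : ∀ i, qL i * f (eL i) = qL i * f x := by
        intro i
        by_cases h : qL i = 0
        · rw [h, zero_mul, zero_mul]
        · rw [hcomb i h]
      rw [Finset.sum_congr rfl fun i _ => hterm i, ← Finset.sum_mul, hqL1, one_mul]
    rw [← hfx]
    apply tendsto_finset_sum
    intro i _
    apply (htend_q i).mul
    have hctw : ContinuousWithinAt f K (eL i) := hf (eL i) (heLK i)
    apply hctw.tendsto.comp
    rw [tendsto_nhdsWithin_iff]
    exact ⟨htend_e i,
      Filter.Eventually.of_forall fun n => extremePoints_subset (hee (ns (φ n)) i)⟩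
  refine ⟨φ, ?_⟩
  have hub' : ∀ n, G (vv (ns (φ n))) ≤
      (∑ i, qq (ns (φ n)) i * f (ee (ns (φ n)) i)) + 1/((ns (φ n) : ℝ)+1) := by
    intro n
    have h1 := hlb (ns (φ n))
    linarith
  have hlb' : ∀ n, (∑ i, qq (ns (φ n)) i * f (ee (ns (φ n)) i)) ≤ G (vv (ns (φ n))) :=
    fun n => hub (ns (φ n))
  have hupper : Tendsto (fun n => (∑ i, qq (ns (φ n)) i * f (ee (ns (φ n)) i))
      + 1/((ns (φ n):ℝ)+1)) atTop (nhds (f x)) := by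
    have h0 : Tendsto (fun n : ℕ => 1/((n:ℝ)+1)) atTop (nhds 0) :=
      tendsto_one_div_add_atTop_nhds_zero_nat
    have h0' : Tendsto (fun n => 1/((ns (φ n):ℝ)+1)) atTop (nhds 0) := h0.comp hnsφ
    simpa using hfval.add h0'
  exact tendsto_of_tendsto_of_tendsto_of_le_of_le hfval hupper hlb' hub'
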